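/- For x, y in the open unit disk 𝔻² ⊂ ℂ, the Apollonian weak metric satisfies δ_{𝔻²}(x,y) = sup_{|a|=1} log(|x−a|/|y−a|) = log((|x−y| + |xȳ−1|)/(1−|y|²)). -/

import Mathlib

open Complex

private lemma normSq_key (a y : ℂ) :
    Complex.normSq ((starRingEnd ℂ) y * a - 1) - Complex.normSq (a - y) =
      (Complex.normSq a - 1) * (Complex.normSq y - 1) := by
  simp [Complex.normSq_apply, Complex.sub_re, Complex.sub_im, Complex.mul_re, Complex.mul_im]
  ring

/-- Explicit formula for the Apollonian weak metric of the unit disk. -/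
theorem apollonian_disk_formula (x y : ℂ) (hx : ‖x‖ < 1) (hy : ‖y‖ < 1) :
    (⨆ a : {a : ℂ // ‖a‖ = 1},
        Real.log (‖x - (a : ℂ)‖ / ‖y - (a : ℂ)‖)) =
      Real.log ((‖x - y‖ + ‖x * (starRingEnd ℂ) y - 1‖) /
        (1 - ‖y‖ ^ 2)) := by
  have hy0 := norm_nonneg y
  have hx0 := norm_nonneg x
  set d : ℝ := 1 - ‖y‖ ^ 2 with hd_def
  have hd : 0 < d := by nlinarith
  have hyc : (1 : ℂ) - y * (starRingEnd ℂ) y = ((d : ℝ) : ℂ) := by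
    rw [Complex.mul_conj, hd_def]
    push_cast [Complex.normSq_eq_norm_sq]
    ring
  have hpne : x * (starRingEnd ℂ) y - 1 ≠ 0 := by
    intro h
    have h1 : x * (starRingEnd ℂ) y = 1 := by linear_combination h
    have : ‖x * (starRingEnd ℂ) y‖ < 1 := by
      rw [norm_mul, Complex.norm_conj]; nlinarith
    rw [h1] at this; simp at this
  have hp : 0 < ‖x * (starRingEnd ℂ) y - 1‖ := norm_pos_iff.mpr hpne
  set K : ℝ := (‖x - y‖ + ‖x * (starRingEnd ℂ) y - 1‖) / d with hK_def
  have hK : 0 < K := div_pos (by positivity) hd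
  have hKd : K * d = ‖x - y‖ + ‖x * (starRingEnd ℂ) y - 1‖ :=
    div_mul_cancel₀ _ hd.ne'
  -- upper bound
  have hub : ∀ a : ℂ, ‖a‖ = 1 → ‖x - a‖ ≤ K * ‖y - a‖ := by
    intro a ha
    have hconj : ‖(starRingEnd ℂ) y * a - 1‖ = ‖a - y‖ := by
      have h1 : Complex.normSq a = 1 := by rw [← Complex.sq_norm, ha]; norm_num
      have h2 := normSq_key a y
      rw [h1] at h2
      rw [Complex.norm_def, Complex.norm_def]
      congr 1
      linarith
    have hid : (a - x) * (1 - y * (starRingEnd ℂ) y) =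
        (1 - x * (starRingEnd ℂ) y) * (a - y) + (x - y) * ((starRingEnd ℂ) y * a - 1) := by
      ring
    have h3 : ‖a - x‖ * d ≤
        ‖x * (starRingEnd ℂ) y - 1‖ * ‖a - y‖ +
          ‖x - y‖ * ‖a - y‖ := by
      have h4 : ‖a - x‖ * d = ‖(a - x) * (1 - y * (starRingEnd ℂ) y)‖ := by
        rw [norm_mul, hyc, Complex.norm_real, Real.norm_eq_abs, abs_of_pos hd]
      rw [h4, hid]
      calc ‖(1 - x * (starRingEnd ℂ) y) * (a - y) + (x - y) * ((starRingEnd ℂ) y * a - 1)‖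
          ≤ ‖(1 - x * (starRingEnd ℂ) y) * (a - y)‖ +
              ‖(x - y) * ((starRingEnd ℂ) y * a - 1)‖ := norm_add_le _ _
        _ = ‖x * (starRingEnd ℂ) y - 1‖ * ‖a - y‖ +
              ‖x - y‖ * ‖a - y‖ := by
            rw [norm_mul, norm_mul, hconj,
              show (1 : ℂ) - x * (starRingEnd ℂ) y = -(x * (starRingEnd ℂ) y - 1) by ring,
              norm_neg]
    have h5 : ‖a - x‖ = ‖x - a‖ := norm_sub_rev a x
    have h6 : ‖a - y‖ = ‖y - a‖ := norm_sub_rev a y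
    rw [h5, h6] at h3
    rw [← mul_le_mul_iff_of_pos_right hd]
    calc ‖x - a‖ * d
        ≤ ‖x * (starRingEnd ℂ) y - 1‖ * ‖y - a‖ +
            ‖x - y‖ * ‖y - a‖ := h3
      _ = (K * d) * ‖y - a‖ := by rw [hKd]; ring
      _ = K * ‖y - a‖ * d := by ring
  -- existence of maximizer
  have hex : ∃ a : ℂ, ‖a‖ = 1 ∧ ‖x - a‖ = K * ‖y - a‖ := by
    by_cases hxy : x = y
    · refine ⟨1, by simp, ?_⟩
      have h1 : ‖y * (starRingEnd ℂ) y - 1‖ = d := by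
        rw [Complex.mul_conj,
          show ((Complex.normSq y : ℝ) : ℂ) - 1 = ((Complex.normSq y - 1 : ℝ) : ℂ) by push_cast; ring,
          Complex.norm_real, Real.norm_eq_abs, Complex.normSq_eq_norm_sq, abs_of_neg (by nlinarith), hd_def]
        ring
      have hKK : K = 1 := by
        rw [hK_def, hxy, h1]
        simp [div_self hd.ne']
      rw [hxy, hKK, one_mul]
    · have hxyne : x - y ≠ 0 := sub_ne_zero.mpr hxy
      have hxy' : 0 < ‖x - y‖ := norm_pos_iff.mpr hxyne
      set p : ℂ := x * (starRingEnd ℂ) y - 1 with hp_def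
      set w0 : ℂ := ((K / ‖p‖ : ℝ) : ℂ) * (1 - x * (starRingEnd ℂ) y) with hw0_def
      have habs_w0 : ‖w0‖ = K := by
        rw [hw0_def, norm_mul, Complex.norm_real, Real.norm_eq_abs, abs_of_pos (div_pos hK hp),
          show (1 : ℂ) - x * (starRingEnd ℂ) y = -p by rw [hp_def]; ring, norm_neg]
        field_simp
      have hK1 : 1 < K := by
        have e' : ((d : ℝ) : ℂ) = -p + (x - y) * (starRingEnd ℂ) y := by
          rw [← hyc, hp_def]; ring
        have t := norm_add_le (-p) ((x - y) * (starRingEnd ℂ) y)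
        rw [← e', Complex.norm_real, Real.norm_eq_abs, abs_of_pos hd, norm_neg, norm_mul,
          Complex.norm_conj] at t
        rw [hK_def, lt_div_iff₀ hd, one_mul]
        nlinarith
      have hw01 : (1 : ℂ) - w0 ≠ 0 := by
        intro h
        have hw : w0 = 1 := by linear_combination -h
        rw [hw] at habs_w0; simp at habs_w0; linarith
      set a0 : ℂ := (x - y * w0) / (1 - w0) with ha0_def
      have hmain : a0 * (1 - w0) = x - y * w0 := by
        rw [ha0_def]; field_simp
      have hay : (a0 - y) * (1 - w0) = x - y := by linear_combination hmain
      have hax : (a0 - x) * (1 - w0) = w0 * (x - y) := by linear_combination hmain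
      have e1 : ((starRingEnd ℂ) y * a0 - 1) * (1 - w0) = p + w0 * (1 - y * (starRingEnd ℂ) y) := by
        rw [hp_def]; linear_combination (starRingEnd ℂ) y * hmain
      have e2 : ((starRingEnd ℂ) y * a0 - 1) * (1 - w0) =
          p * (((1 : ℝ) - K * d / ‖p‖ : ℝ) : ℂ) := by
        rw [e1, hyc, hw0_def, show (1 : ℂ) - x * (starRingEnd ℂ) y = -p by rw [hp_def]; ring]
        push_cast
        ring
      have hr : (1 : ℝ) - K * d / ‖p‖ = -(‖x - y‖ / ‖p‖) := by
        field_simp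
        linarith [hKd]
      have habs_e2 : ‖(starRingEnd ℂ) y * a0 - 1‖ * ‖1 - w0‖ =
          ‖x - y‖ := by
        rw [← norm_mul, e2, norm_mul, Complex.norm_real, Real.norm_eq_abs, hr, abs_neg,
          _root_.abs_of_nonneg (by positivity)]
        field_simp
      have habs_ay : ‖a0 - y‖ * ‖1 - w0‖ = ‖x - y‖ := by
        rw [← norm_mul, hay]
      have h1w0 : 0 < ‖1 - w0‖ := norm_pos_iff.mpr hw01
      have hconj_eq : ‖(starRingEnd ℂ) y * a0 - 1‖ = ‖a0 - y‖ :=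
        mul_right_cancel₀ h1w0.ne' (habs_e2.trans habs_ay.symm)
      have ha0_abs : ‖a0‖ = 1 := by
        have h2 := normSq_key a0 y
        have h3 : Complex.normSq ((starRingEnd ℂ) y * a0 - 1) = Complex.normSq (a0 - y) := by
          rw [← Complex.sq_norm, ← Complex.sq_norm, hconj_eq]
        have h4 : Complex.normSq y - 1 ≠ 0 := by
          rw [Complex.normSq_eq_norm_sq]; nlinarith
        have h5 : Complex.normSq a0 - 1 = 0 := by
          rcases mul_eq_zero.mp
              (by linarith : (Complex.normSq a0 - 1) * (Complex.normSq y - 1) = 0) with h | h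
          · exact h
          · exact absurd h h4
        rw [← Complex.sq_norm] at h5
        nlinarith [norm_nonneg a0]
      refine ⟨a0, ha0_abs, ?_⟩
      have habs_ax : ‖a0 - x‖ * ‖1 - w0‖ = K * ‖x - y‖ := by
        rw [← norm_mul, hax, norm_mul, habs_w0]
      have h5 : ‖x - a0‖ = ‖a0 - x‖ := (norm_sub_rev a0 x).symm
      have h6 : ‖y - a0‖ = ‖a0 - y‖ := (norm_sub_rev a0 y).symm
      rw [h5, h6]
      apply mul_right_cancel₀ h1w0.ne'
      rw [habs_ax, mul_assoc, habs_ay]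
  -- positivity facts
  have hposy : ∀ a : ℂ, ‖a‖ = 1 → 0 < ‖y - a‖ := by
    intro a ha
    apply norm_pos_iff.mpr
    intro h
    have : y = a := by linear_combination h
    rw [this, ha] at hy; linarith
  have hposx : ∀ a : ℂ, ‖a‖ = 1 → 0 < ‖x - a‖ := by
    intro a ha
    apply norm_pos_iff.mpr
    intro h
    have : x = a := by linear_combination h
    rw [this, ha] at hx; linarith
  -- conclude about the supremum
  have inst : Nonempty {a : ℂ // ‖a‖ = 1} := ⟨⟨1, by simp⟩⟩
  obtain ⟨a0, ha0, hratio⟩ := hex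
  have hbdd : BddAbove (Set.range fun a : {a : ℂ // ‖a‖ = 1} =>
      Real.log (‖x - (a : ℂ)‖ / ‖y - (a : ℂ)‖)) := by
    refine ⟨Real.log K, ?_⟩
    rintro r ⟨a, rfl⟩
    have h1 : ‖x - (a : ℂ)‖ / ‖y - (a : ℂ)‖ ≤ K :=
      (div_le_iff₀ (hposy a a.2)).mpr (hub a a.2)
    exact Real.log_le_log (div_pos (hposx a a.2) (hposy a a.2)) h1
  apply le_antisymm
  · apply ciSup_le
    intro a
    have h1 : ‖x - (a : ℂ)‖ / ‖y - (a : ℂ)‖ ≤ K :=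
      (div_le_iff₀ (hposy a a.2)).mpr (hub a a.2)
    exact Real.log_le_log (div_pos (hposx a a.2) (hposy a a.2)) h1
  · have h1 : Real.log K = Real.log (‖x - a0‖ / ‖y - a0‖) := by
      rw [hratio, mul_div_assoc, div_self (hposy a0 ha0).ne', mul_one]
    rw [h1]
    exact le_ciSup hbdd ⟨a0, ha0⟩
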